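/- Let E be a finite type, P sub-stochastic with spectral radius < 1, κ(x) = 1 − ∑_y P(x,y), μ a probability vector, R = (I−P)⁻¹, and Π(y) = (μR)(y)/(μR·1). Then the exit-location distribution equals the κ-reweighting of Π: for every y, P_μ(killed at y) = κ(y)Π(y) / ∑_x κ(x)Π(x). -/

import Mathlib

open Matrix Finset
attribute [local instance] Matrix.linftyOpNormedRing Matrix.linftyOpNormedAlgebra

open Filter ENNReal in
private lemma aux_entry_nnnorm_le {E : Type*} [Fintype E] [DecidableEq E]
    (A : Matrix E E ℂ) (i j : E) : ‖A i j‖₊ ≤ ‖A‖₊ := by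
  rw [Matrix.linfty_opNNNorm_def]
  calc ‖A i j‖₊ ≤ ∑ k, ‖A i k‖₊ :=
        Finset.single_le_sum (f := fun k => ‖A i k‖₊) (fun _ _ => zero_le) (mem_univ j)
    _ ≤ _ := Finset.le_sup (f := fun i => ∑ j, ‖A i j‖₊) (mem_univ i)

open Filter ENNReal in
private lemma aux_summable_pow_norm {E : Type*} [Fintype E] [DecidableEq E] [Nonempty E]
    (A : Matrix E E ℂ) (hA : spectralRadius ℂ A < 1) :
    Summable (fun n : ℕ => ‖A ^ n‖) := by
  obtain ⟨r, hr1, hr2⟩ := ENNReal.lt_iff_exists_nnreal_btwn.mp hA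
  have hr1' : (r:ℝ) < 1 := by exact_mod_cast hr2
  have h := spectrum.pow_nnnorm_pow_one_div_tendsto_nhds_spectralRadius A
  have hev : ∀ᶠ n : ℕ in atTop, (‖A ^ n‖₊ : ℝ≥0∞) ^ (1 / (n:ℝ)) < (r : ℝ≥0∞) :=
    h.eventually_lt_const hr1
  have hev2 : ∀ᶠ n : ℕ in atTop, ‖A ^ n‖ ≤ (r:ℝ) ^ n := by
    filter_upwards [hev, eventually_ge_atTop 1] with n hn hn1
    have hn0 : (n:ℝ) ≠ 0 := by positivity
    have h2 : ((‖A ^ n‖₊ : ℝ≥0∞) ^ (1 / (n:ℝ))) ^ (n:ℝ) ≤ ((r : ℝ≥0∞)) ^ (n:ℝ) :=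
      ENNReal.rpow_le_rpow hn.le (by positivity)
    rw [← ENNReal.rpow_mul, one_div, inv_mul_cancel₀ hn0, ENNReal.rpow_one,
      ENNReal.rpow_natCast] at h2
    have h3 : ‖A ^ n‖₊ ≤ r ^ n := by exact_mod_cast h2
    have h4 := NNReal.coe_le_coe.mpr h3
    push_cast at h4
    simpa [coe_nnnorm] using h4
  refine Summable.of_norm_bounded_eventually_nat
    (summable_geometric_of_lt_one (by positivity) hr1') ?_
  simpa [Real.norm_of_nonneg (norm_nonneg _)] using hev2

set_option maxHeartbeats 1000000 in
/-- **Discrete Corollary 3.2.** The exit-location distribution of the killed chain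
started from `μ` is the `κ`-reweighting of the invariant distribution
`Pi(y) = (μR)(y)/(μR𝟙)` of the `μ`-resurrected chain:
`P_μ(killed at y) = ∑_{n≥0} (μPⁿ)(y) κ(y) = κ(y) Pi(y) / ∑_x κ(x) Pi(x)`. -/
theorem exit_location_via_resurrected
    {E : Type*} [Fintype E] [DecidableEq E] [Nonempty E]
    (P : Matrix E E ℝ)
    (hP_nonneg : ∀ x y, 0 ≤ P x y) (hP_sub : ∀ x, ∑ y, P x y ≤ 1)
    (hP_spec : spectralRadius ℂ (P.map Complex.ofReal) < 1)
    (κ : E → ℝ) (hκ : ∀ x, κ x = 1 - ∑ y, P x y)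
    (μ : E → ℝ) (hμ_nonneg : ∀ x, 0 ≤ μ x) (hμ_sum : ∑ x, μ x = 1)
    (R : Matrix E E ℝ) (hR : R = (1 - P)⁻¹)
    (Pi : E → ℝ)
    (hPi : ∀ y, Pi y = (∑ z, μ z * R z y) / (∑ w, ∑ z, μ z * R z w)) :
    ∀ y, (∑' n : ℕ, (∑ x, μ x * (P ^ n) x y) * κ y)
      = κ y * Pi y / ∑ x, κ x * Pi x := by
  set A : Matrix E E ℂ := P.map Complex.ofReal with hA
  have hnorm : Summable (fun n : ℕ => ‖A ^ n‖) := aux_summable_pow_norm A hP_spec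
  -- entries of powers commute with the coercion
  have hmap : ∀ (n : ℕ) (x y : E), (A ^ n) x y = ((P ^ n) x y : ℂ) := by
    intro n
    induction n with
    | zero =>
        intro x y
        by_cases h : x = y <;> simp [pow_zero, Matrix.one_apply, h]
    | succ n ih =>
        intro x y
        rw [pow_succ, pow_succ, Matrix.mul_apply, Matrix.mul_apply]
        push_cast
        refine Finset.sum_congr rfl fun z _ => ?_
        rw [ih x z]
        rfl
  -- entrywise summability
  have hsum : ∀ x y : E, Summable (fun n : ℕ => (P ^ n) x y) := by
    intro x y
    have hC : Summable (fun n : ℕ => (A ^ n) x y) := by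
      refine Summable.of_norm_bounded hnorm fun n => ?_
      exact_mod_cast aux_entry_nnnorm_le (A ^ n) x y
    rw [funext fun n => hmap n x y] at hC
    exact Complex.summable_ofReal.mp hC
  -- nonnegativity of powers
  have hpow_nonneg : ∀ (n : ℕ) (x y : E), 0 ≤ (P ^ n) x y := by
    intro n
    induction n with
    | zero => intro x y; by_cases h : x = y <;> simp [pow_zero, Matrix.one_apply, h]
    | succ n ih =>
        intro x y
        rw [pow_succ, Matrix.mul_apply]
        exact Finset.sum_nonneg fun z _ => mul_nonneg (ih x z) (hP_nonneg z y)
  -- the resolvent as a matrix of tsums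
  set T : Matrix E E ℝ := Matrix.of (fun x y => ∑' n : ℕ, (P ^ n) x y) with hT
  have hT_apply : ∀ x y, T x y = ∑' n : ℕ, (P ^ n) x y := fun _ _ => rfl
  have hT_nonneg : ∀ x y, 0 ≤ T x y := fun x y =>
    tsum_nonneg fun n => hpow_nonneg n x y
  -- (1 - P) * T = 1
  have hright : (1 - P) * T = 1 := by
    ext x y
    rw [Matrix.mul_apply]
    calc ∑ z, (1 - P) x z * T z y
        = ∑ z, ∑' n : ℕ, (1 - P) x z * (P ^ n) z y := by
          exact Finset.sum_congr rfl fun z _ => by rw [hT_apply, tsum_mul_left]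
      _ = ∑' n : ℕ, ∑ z, (1 - P) x z * (P ^ n) z y := by
          exact (Summable.tsum_finsetSum fun z _ => (hsum z y).mul_left _).symm
      _ = ∑' n : ℕ, ((1 - P) * (P ^ n)) x y := by
          exact tsum_congr fun n => (Matrix.mul_apply).symm
      _ = ∑' n : ℕ, ((P ^ n) x y - (P ^ (n+1)) x y) := by
          refine tsum_congr fun n => ?_
          have : (1 - P) * (P ^ n) = P ^ n - P ^ (n+1) := by
            rw [sub_mul, one_mul, ← pow_succ']
          rw [this, Matrix.sub_apply]
      _ = (1 : Matrix E E ℝ) x y := by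
          have hs := hsum x y
          have hs1 : Summable (fun n : ℕ => (P ^ (n+1)) x y) :=
            (summable_nat_add_iff 1).mpr hs
          rw [Summable.tsum_sub hs hs1]
          have h0 := Summable.tsum_eq_zero_add hs
          have h1 : ∑' n : ℕ, (P ^ (n+1)) x y
              = (∑' n : ℕ, (P ^ n) x y) - (P ^ 0) x y := by
            rw [h0]; ring
          rw [h1, pow_zero]
          ring
  have hRT : R = T := by rw [hR, Matrix.inv_eq_right_inv hright]
  have hleft : T * (1 - P) = 1 := mul_eq_one_comm.mp hright
  -- the vector v = μ R
  set v : E → ℝ := fun y => ∑ z, μ z * T z y with hv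
  have hv_nonneg : ∀ y, 0 ≤ v y := fun y =>
    Finset.sum_nonneg fun z _ => mul_nonneg (hμ_nonneg z) (hT_nonneg z y)
  have hμT : ∀ y, ∑ x, v x * (1 - P) x y = μ y := by
    intro y
    calc ∑ x, v x * (1 - P) x y
        = ∑ x, ∑ z, μ z * T z x * (1 - P) x y := by
          refine Finset.sum_congr rfl fun x _ => ?_
          rw [hv, Finset.sum_mul]
      _ = ∑ z, μ z * ∑ x, T z x * (1 - P) x y := by
          rw [Finset.sum_comm]
          refine Finset.sum_congr rfl fun z _ => ?_
          rw [Finset.mul_sum]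
          exact Finset.sum_congr rfl fun x _ => by ring
      _ = ∑ z, μ z * (T * (1 - P)) z y := by
          exact Finset.sum_congr rfl fun z _ => by rw [Matrix.mul_apply]
      _ = ∑ z, μ z * (1 : Matrix E E ℝ) z y := by rw [hleft]
      _ = μ y := by
          rw [Finset.sum_eq_single y (fun z _ hz => by simp [Matrix.one_apply_ne hz])
            (fun h => absurd (mem_univ y) h)]
          simp [Matrix.one_apply_eq]
  have hκrow : ∀ x, κ x = ∑ y, (1 - P) x y := by
    intro x
    rw [hκ x]
    simp only [Matrix.sub_apply, Finset.sum_sub_distrib]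
    congr 1
    rw [Finset.sum_eq_single x (fun z _ hz => Matrix.one_apply_ne' hz)
      (fun h => absurd (mem_univ x) h), Matrix.one_apply_eq]
  have hκv : ∑ x, κ x * v x = 1 := by
    calc ∑ x, κ x * v x
        = ∑ x, ∑ y, v x * (1 - P) x y := by
          refine Finset.sum_congr rfl fun x _ => ?_
          rw [hκrow x, Finset.sum_mul]
          exact Finset.sum_congr rfl fun y _ => mul_comm _ _
      _ = ∑ y, ∑ x, v x * (1 - P) x y := Finset.sum_comm
      _ = ∑ y, μ y := Finset.sum_congr rfl fun y _ => hμT y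
      _ = 1 := hμ_sum
  -- positivity of the normalizer
  have hκ_le_one : ∀ x, κ x ≤ 1 := by
    intro x
    rw [hκ x]
    have : 0 ≤ ∑ y, P x y := Finset.sum_nonneg fun y _ => hP_nonneg x y
    linarith
  set S : ℝ := ∑ w, v w with hS
  have hS_ge : (1:ℝ) ≤ S := by
    rw [hS, ← hκv]
    exact Finset.sum_le_sum fun x _ =>
      mul_le_of_le_one_left (hv_nonneg x) (hκ_le_one x)
  have hS_ne : S ≠ 0 := by linarith
  have hvR : ∀ y, (∑ z, μ z * R z y) = v y := by
    intro y; rw [hRT]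
  have hPi' : ∀ z, Pi z = v z / S := by
    intro z
    rw [hPi z, hvR z]
    congr 1
    exact Finset.sum_congr rfl fun w _ => hvR w
  have hsumκPi : ∑ x, κ x * Pi x = 1 / S := by
    calc ∑ x, κ x * Pi x = ∑ x, κ x * v x / S := by
          exact Finset.sum_congr rfl fun x _ => by rw [hPi' x, mul_div_assoc]
      _ = (∑ x, κ x * v x) / S := by rw [Finset.sum_div]
      _ = 1 / S := by rw [hκv]
  intro y
  have hLHS : (∑' n : ℕ, (∑ x, μ x * (P ^ n) x y) * κ y) = v y * κ y := by
    rw [tsum_mul_right]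
    congr 1
    calc (∑' n : ℕ, ∑ x, μ x * (P ^ n) x y)
        = ∑ x, ∑' n : ℕ, μ x * (P ^ n) x y :=
          Summable.tsum_finsetSum fun x _ => (hsum x y).mul_left _
      _ = ∑ x, μ x * T x y := by
          exact Finset.sum_congr rfl fun x _ => by rw [hT_apply, tsum_mul_left]
      _ = v y := rfl
  rw [hLHS, hPi' y, hsumκPi]
  field_simp
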